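/- arXiv:2504.05930 — 2 statements merged into one kernel-verified Lean document; each statement's English description precedes it below -/
import Mathlib

section
/- Let A and B be disjoint finite sets of integer vectors in Z^n such that A ∪ B is linearly independent and gcddet(A ∪ B) = gcddet(A)·gcddet(B) (lattice orthogonality). Then the number of integer points in the half-open zonotope Z^<(A ∪ B) equals the product of the numbers of integer points in Z^<(A) and Z^<(B). -/
open Set Submodule Matrix


/-- The gcd of the maximal (`k × k`) minors of the integer matrix whose rows are
the vectors of the family `A`. -/
noncomputable def gcdDet {k n : ℕ} (A : Fin k → Fin n → ℤ) : ℕ :=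
  Finset.univ.gcd fun g : Fin k ↪ Fin n =>
    (Matrix.of fun i j => A i (g j)).det.natAbs

/-- The integer points of the half-open zonotope
`Z^<(A) = { Σ_a λ_a a : 0 ≤ λ_a < 1 }` generated by the family `A`. -/
def zonoPts {k n : ℕ} (A : Fin k → Fin n → ℤ) : Set (Fin n → ℤ) :=
  {x | ∃ c : Fin k → ℚ, (∀ i, 0 ≤ c i ∧ c i < 1) ∧
    ∀ j, (x j : ℚ) = ∑ i, c i * (A i j : ℚ)}

def castQ (n : ℕ) : (Fin n → ℤ) →ₗ[ℤ] (Fin n → ℚ) where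
  toFun x := fun i => (x i : ℚ)
  map_add' x y := by funext i; simp [Pi.add_apply]
  map_smul' m x := by funext i; simp [zsmul_eq_mul]

@[simp] lemma castQ_apply {n : ℕ} (x : Fin n → ℤ) (i : Fin n) : castQ n x i = (x i : ℚ) := rfl

lemma castQ_inj (n : ℕ) : Function.Injective (castQ n) := by
  intro x y h
  funext i
  have := congrFun h i
  simpa using this

lemma linIndepQ {k n : ℕ} {S : Fin k → Fin n → ℤ} (h : LinearIndependent ℤ S) :
    LinearIndependent ℚ (fun i => castQ n (S i)) := by
  rw [← LinearIndependent.iff_fractionRing (R := ℤ) (K := ℚ)]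
  exact h.map' (castQ n) (LinearMap.ker_eq_bot_of_injective (castQ_inj n))

lemma exists_minor_ne_zero {F : Type*} [Field F] {k n : ℕ} {v : Fin k → Fin n → F}
    (h : LinearIndependent F v) :
    ∃ g : Fin k ↪ Fin n, (Matrix.of fun i j => v i (g j)).det ≠ 0 := by
  classical
  set cols : Fin n → (Fin k → F) := fun j i => v i j with hcols
  have hrank : (Matrix.of v).rank = k := by
    have : LinearIndependent F (Matrix.of v) := h
    simpa using this.rank_matrix
  have hspan : span F (range cols) = ⊤ := by
    have h1 : (Matrix.of v).rank = Module.finrank F (span F (range (Matrix.of v)ᵀ)) :=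
      Matrix.rank_eq_finrank_span_cols _
    have h2 : range (Matrix.of v)ᵀ = range cols := rfl
    apply Submodule.eq_top_of_finrank_eq
    rw [← h2, ← h1, hrank]
    simp [Module.finrank_pi]
  obtain ⟨t, hts, htsp, htli⟩ := exists_linearIndependent F (range cols)
  rw [hspan] at htsp
  have htfin : t.Finite := htli.setFinite
  have : Fintype t := htfin.fintype
  have hsp2 : ⊤ ≤ span F (range ((↑) : t → (Fin k → F))) := by
    rw [Subtype.range_coe, htsp]
  have hcard : Fintype.card t = k := by
    have := Module.finrank_eq_card_basis (Module.Basis.mk htli hsp2)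
    simp only [Module.finrank_pi, Fintype.card_fin] at this
    refine Eq.trans ?_ this.symm
    congr 1
  have e : Fin k ≃ t := (Fintype.equivFinOfCardEq hcard).symm
  have hchoice : ∀ x : t, ∃ j : Fin n, cols j = (x : Fin k → F) := fun x => hts x.2
  choose jdx hjdx using hchoice
  have hg : Function.Injective (fun i : Fin k => jdx (e i)) := by
    intro i i' hii
    have : ((e i : Set.Elem t) : Fin k → F) = ((e i' : Set.Elem t) : Fin k → F) := by
      rw [← hjdx (e i), ← hjdx (e i')]; simp only at hii; rw [hii]
    have : e i = e i' := Subtype.ext this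
    exact e.injective this
  refine ⟨⟨fun i => jdx (e i), hg⟩, ?_⟩
  have hmat : (Matrix.of fun i j => v i (jdx (e j))) =
      (Pi.basisFun F (Fin k)).toMatrix (fun j => ((e j : Set.Elem t) : Fin k → F)) := by
    ext i j
    rw [Module.Basis.toMatrix_apply]
    simp only [Pi.basisFun_repr]
    rw [← hjdx (e j)]
    rfl
  simp only [Function.Embedding.coeFn_mk]
  rw [hmat]
  set bT' : Module.Basis (Fin k) F (Fin k → F) := (Module.Basis.mk htli hsp2).reindex e.symm with hbT'def
  have hbT' : (fun j => ((e j : Set.Elem t) : Fin k → F)) = fun j => bT' j := by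
    funext j
    rw [hbT'def, Module.Basis.reindex_apply, Equiv.symm_symm, Module.Basis.mk_apply]
  rw [hbT']
  have hunit : IsUnit ((Pi.basisFun F (Fin k)).toMatrix (fun j => bT' j)).det := by
    have h1 := Module.Basis.toMatrix_mul_toMatrix_flip (Pi.basisFun F (Fin k)) bT'
    have hdet : ((Pi.basisFun F (Fin k)).toMatrix bT').det *
        (bT'.toMatrix (Pi.basisFun F (Fin k))).det = 1 := by
      rw [← Matrix.det_mul, h1, Matrix.det_one]
    exact IsUnit.of_mul_eq_one _ hdet
  exact hunit.ne_zero

theorem zono_card {k n : ℕ} (S : Fin k → Fin n → ℤ) (h : LinearIndependent ℤ S) :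
    (zonoPts S).ncard = gcdDet S := by
  classical
  set Sq : Fin k → Fin n → ℚ := fun i => castQ n (S i) with hSqdef
  have hq : LinearIndependent ℚ Sq := linIndepQ h
  set L : Submodule ℤ (Fin n → ℤ) := Submodule.span ℤ (Set.range S) with hLdef
  set Wq : Submodule ℚ (Fin n → ℚ) := Submodule.span ℚ (Set.range Sq) with hWqdef
  set M : Submodule ℤ (Fin n → ℤ) := (Wq.restrictScalars ℤ).comap (castQ n) with hMdef
  have hmemM : ∀ x : Fin n → ℤ, x ∈ M ↔ castQ n x ∈ Wq := fun x => Iff.rfl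
  have hSM : ∀ i, S i ∈ M := fun i => Submodule.subset_span ⟨i, rfl⟩
  have hLM : L ≤ M := Submodule.span_le.2 (by rintro _ ⟨i, rfl⟩; exact hSM i)
  obtain ⟨k1, k2, hk12, bO, bN, a, hsnf⟩ :=
    Submodule.exists_smith_normal_form_of_le (Pi.basisFun ℤ (Fin n)) L M hLM
  -- k1 = k
  have hk1 : k = k1 := by
    have e := Module.Basis.indexEquiv bN (Module.Basis.span h)
    simpa using (Fintype.card_congr e).symm
  subst hk1
  -- k2 = k
  have hk2 : k = k2 := by
    refine (le_antisymm ?_ hk12).symm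
    have h1 : LinearIndependent ℤ (fun i => ((bO i : Fin n → ℤ))) :=
      bO.linearIndependent.map' M.subtype (Submodule.ker_subtype M)
    have h2 : LinearIndependent ℚ (fun i => castQ n ((bO i : Fin n → ℤ))) := linIndepQ h1
    have h3 : span ℚ (range fun i => castQ n ((bO i : Fin n → ℤ))) ≤ Wq := by
      rw [Submodule.span_le]
      rintro _ ⟨i, rfl⟩
      exact (hmemM _).mp (bO i).2
    have h4 : Module.finrank ℚ (span ℚ (range fun i => castQ n ((bO i : Fin n → ℤ)))) =
        Fintype.card (Fin k2) := finrank_span_eq_card h2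
    have h5 : Module.finrank ℚ (span ℚ (range Sq)) = Fintype.card (Fin k) :=
        finrank_span_eq_card hq
    have h6 : Module.finrank ℚ (span ℚ (range fun i => castQ n ((bO i : Fin n → ℤ)))) ≤
        Module.finrank ℚ Wq := Submodule.finrank_mono h3
    rw [h4, hWqdef, h5] at h6
    simpa using h6
  subst hk2
  have hid : ∀ i : Fin k, Fin.castLE hk12 i = i := fun i => Fin.ext rfl
  have hab : ∀ i, ((bN i : Fin n → ℤ)) = a i • ((bO i : Fin n → ℤ)) := by
    intro i
    rw [hsnf i, hid i]
  have ha : ∀ i, a i ≠ 0 := by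
    intro i hai
    apply bN.ne_zero i
    have : ((bN i : Fin n → ℤ)) = 0 := by rw [hab i, hai, zero_smul]
    exact Subtype.ext this
  -- membership of zonotope points in M
  have hz2M : ∀ x ∈ zonoPts S, x ∈ M := by
    rintro x ⟨c, hc, hx⟩
    rw [hmemM]
    refine (mem_span_range_iff_exists_fun ℚ).mpr ⟨c, ?_⟩
    funext j
    simp only [Finset.sum_apply, Pi.smul_apply, smul_eq_mul]
    exact (hx j).symm
  -- injectivity of the quotient map on the zonotope
  have hinj : Set.InjOn L.mkQ (zonoPts S) := by
    rintro x ⟨c, hc, hx⟩ y ⟨d, hd, hy⟩ hxy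
    rw [Submodule.mkQ_apply, Submodule.mkQ_apply, Submodule.Quotient.eq] at hxy
    obtain ⟨m, hm⟩ := (mem_span_range_iff_exists_fun ℤ).mp hxy
    have hco : ∀ i, c i - d i - (m i : ℚ) = 0 := by
      apply Fintype.linearIndependent_iff.mp hq
      funext j
      simp only [Finset.sum_apply, Pi.smul_apply, smul_eq_mul, Pi.zero_apply, hSqdef, castQ_apply]
      have h0 := congrFun hm j
      simp only [Finset.sum_apply, Pi.smul_apply, Pi.sub_apply, smul_eq_mul] at h0
      have h1 : ∑ i, (m i : ℚ) * (S i j : ℚ) = (x j : ℚ) - (y j : ℚ) := by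
        exact_mod_cast congrArg (fun t : ℤ => (t : ℚ)) h0
      have h2 : ∑ i, (c i - d i - (m i : ℚ)) * (S i j : ℚ)
          = ((∑ i, c i * (S i j : ℚ)) - ∑ i, d i * (S i j : ℚ))
            - ∑ i, (m i : ℚ) * (S i j : ℚ) := by
        rw [← Finset.sum_sub_distrib, ← Finset.sum_sub_distrib]
        exact Finset.sum_congr rfl fun i _ => by ring
      rw [h2, ← hx j, ← hy j, h1]
      ring
    have hmz : ∀ i, m i = 0 := by
      intro i
      have h1 := hco i
      have h2 : (m i : ℚ) = c i - d i := by linarith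
      have h3 : (m i : ℚ) < 1 := by
        rw [h2]; have := (hc i).2; have := (hd i).1; linarith
      have h4 : (-1 : ℚ) < (m i : ℚ) := by
        rw [h2]; have := (hc i).1; have := (hd i).2; linarith
      have h3' : m i < 1 := by exact_mod_cast h3
      have h4' : -1 < m i := by exact_mod_cast h4
      omega
    have hcd : ∀ i, c i = d i := by
      intro i
      have h1 := hco i
      rw [hmz i] at h1
      push_cast at h1
      linarith
    funext j
    have : (x j : ℚ) = (y j : ℚ) := by
      rw [hx j, hy j]
      congr 1
      funext i
      rw [hcd i]
    exact_mod_cast this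
  -- image of the zonotope equals image of M
  have himage : L.mkQ '' (zonoPts S) = L.mkQ '' (M : Set (Fin n → ℤ)) := by
    apply Set.Subset.antisymm
    · exact Set.image_mono (fun x hx => hz2M x hx)
    · rintro _ ⟨m, hm, rfl⟩
      have hmW : castQ n m ∈ Wq := (hmemM m).mp hm
      obtain ⟨r, hr⟩ := (mem_span_range_iff_exists_fun ℚ).mp hmW
      set z : Fin n → ℤ := m - ∑ i, ⌊r i⌋ • S i with hzdef
      have hzzono : z ∈ zonoPts S := by
        refine ⟨fun i => Int.fract (r i), fun i => ⟨Int.fract_nonneg _, Int.fract_lt_one _⟩, ?_⟩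
        intro j
        have h1 : (m j : ℚ) = ∑ i, r i * (S i j : ℚ) := by
          have := congrFun hr j
          simp only [Finset.sum_apply, Pi.smul_apply, smul_eq_mul, hSqdef, castQ_apply] at this
          exact this.symm
        have h2 : (z j : ℚ) = (m j : ℚ) - ∑ i, (⌊r i⌋ : ℚ) * (S i j : ℚ) := by
          have h0 : z j = m j - ∑ i, ⌊r i⌋ * S i j := by
            rw [hzdef]
            simp [Pi.sub_apply, Finset.sum_apply, Pi.smul_apply, smul_eq_mul]
          rw [h0]
          push_cast
          ring
        rw [h2, h1, ← Finset.sum_sub_distrib]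
        exact Finset.sum_congr rfl fun i _ => by
          simp only []
          rw [← Int.self_sub_floor]
          ring
      refine ⟨z, hzzono, ?_⟩
      rw [Submodule.mkQ_apply, Submodule.mkQ_apply, Submodule.Quotient.eq]
      rw [hzdef]
      have : m - ∑ i, ⌊r i⌋ • S i - m = -(∑ i, ⌊r i⌋ • S i) := by abel
      rw [this]
      exact neg_mem (Submodule.sum_mem _ fun i _ =>
        Submodule.smul_mem _ _ (Submodule.subset_span ⟨i, rfl⟩))
  -- the linear map ψ : M → Π i, ZMod (a i).natAbs
  set ψ : (↥M) →ₗ[ℤ] (∀ i : Fin k, ZMod (a i).natAbs) :=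
    LinearMap.pi (fun i => (Int.castAddHom (ZMod (a i).natAbs)).toIntLinearMap ∘ₗ
      (Finsupp.lapply i ∘ₗ bO.repr.toLinearMap)) with hψdef
  have hψ : ∀ (m : ↥M) (i : Fin k), ψ m i = ((bO.repr m i : ℤ) : ZMod (a i).natAbs) := by
    intro m i
    rfl
  have hψsurj : Function.Surjective ψ := by
    intro y
    choose t ht using fun i => ZMod.intCast_surjective (n := (a i).natAbs) (y i)
    refine ⟨∑ i, t i • bO i, ?_⟩
    funext i
    rw [hψ, bO.repr_sum_self]
    exact ht i
  have hψker : LinearMap.ker ψ = L.comap M.subtype := by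
    ext m
    simp only [LinearMap.mem_ker, Submodule.mem_comap, Submodule.subtype_apply]
    constructor
    · intro hm
      have hdv : ∀ i, a i ∣ bO.repr m i := by
        intro i
        have := congrFun hm i
        rw [hψ] at this
        simp only [Pi.zero_apply] at this
        have h2 : ((a i).natAbs : ℤ) ∣ bO.repr m i :=
          (ZMod.intCast_zmod_eq_zero_iff_dvd _ _).mp this
        rwa [Int.natAbs_dvd] at h2
      choose u hu using hdv
      have hm2 : (m : Fin n → ℤ) = ∑ i, u i • ((bN i : Fin n → ℤ)) := by
        have h3 := bO.sum_repr m
        have h4 : ((∑ i, bO.repr m i • bO i : ↥M) : Fin n → ℤ) = (m : Fin n → ℤ) := by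
          rw [h3]
        rw [← h4]
        push_cast
        refine Finset.sum_congr rfl fun i _ => ?_
        rw [hab i, hu i, smul_smul, mul_comm]
      rw [hm2]
      exact Submodule.sum_mem _ fun i _ => Submodule.smul_mem _ _ (bN i).2
    · intro hm
      set mL : ↥L := ⟨(m : Fin n → ℤ), hm⟩ with hmLdef
      set cc : Fin k → ℤ := fun i => bN.repr mL i with hccdef
      have h3 : (m : Fin n → ℤ) = ∑ i, (cc i * a i) • ((bO i : Fin n → ℤ)) := by
        have h4 := bN.sum_repr mL
        have h5 : ((∑ i, bN.repr mL i • bN i : ↥L) : Fin n → ℤ) = (m : Fin n → ℤ) := by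
          rw [h4]
        rw [← h5]
        push_cast
        refine Finset.sum_congr rfl fun i _ => ?_
        rw [hab i, smul_smul]
      have h6 : m = ∑ i, (cc i * a i) • bO i := by
        apply Subtype.ext
        rw [h3]
        push_cast
        rfl
      funext i
      rw [hψ, h6, bO.repr_sum_self]
      simp only [Pi.zero_apply]
      rw [ZMod.intCast_zmod_eq_zero_iff_dvd, Int.natAbs_dvd]
      exact ⟨cc i, mul_comm _ _⟩
  -- counting
  have hcount : (zonoPts S).ncard = ∏ i, (a i).natAbs := by
    set φ : (↥M) →ₗ[ℤ] ((Fin n → ℤ) ⧸ L) := L.mkQ ∘ₗ M.subtype with hφdef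
    have hφker : LinearMap.ker φ = L.comap M.subtype := by
      rw [hφdef, LinearMap.ker_comp, Submodule.ker_mkQ]
    have hφrange : LinearMap.range φ = M.map L.mkQ := by
      rw [hφdef, LinearMap.range_comp, Submodule.range_subtype]
    calc (zonoPts S).ncard = (L.mkQ '' (zonoPts S)).ncard := (Set.ncard_image_of_injOn hinj).symm
      _ = (L.mkQ '' (M : Set (Fin n → ℤ))).ncard := by rw [himage]
      _ = Nat.card (↥(M.map L.mkQ)) := by
          rw [← Nat.card_coe_set_eq]
          rfl
      _ = Nat.card (↥M ⧸ LinearMap.ker φ) := by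
          refine (Nat.card_congr ?_).symm
          refine (φ.quotKerEquivRange.toEquiv.trans ?_)
          exact Equiv.setCongr (congrArg _ hφrange)
      _ = Nat.card (↥M ⧸ LinearMap.ker ψ) := by rw [hφker, ← hψker]
      _ = Nat.card (∀ i : Fin k, ZMod (a i).natAbs) :=
          Nat.card_congr (LinearMap.quotKerEquivOfSurjective ψ hψsurj).toEquiv
      _ = ∏ i, (a i).natAbs := by
          rw [Nat.card_pi]
          exact Finset.prod_congr rfl fun i _ => Nat.card_zmod _
  -- the matrix of the basis of M
  set Bm : Fin k → Fin n → ℤ := fun i => ((bO i : Fin n → ℤ)) with hBmdef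
  have hBmli : LinearIndependent ℤ Bm :=
    bO.linearIndependent.map' M.subtype (Submodule.ker_subtype M)
  set bS : Module.Basis (Fin k) ℤ ↥L := Module.Basis.span h with hbSdef
  set U : Fin k → Fin k → ℤ := fun i l => bN.repr (bS i) l with hUdef
  have hS_eq : ∀ i j, S i j = ∑ l, U i l * (a l * Bm l j) := by
    intro i j
    have h1 : ((bS i : Fin n → ℤ)) = S i := congrArg Subtype.val (Module.Basis.span_apply h i)
    have h2 : ((∑ l, bN.repr (bS i) l • bN l : ↥L) : Fin n → ℤ) = ((bS i : Fin n → ℤ)) := by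
      rw [bN.sum_repr (bS i)]
    have h3 : S i = ∑ l, U i l • ((bN l : Fin n → ℤ)) := by
      rw [← h1, ← h2]
      push_cast
      rfl
    have h4 := congrFun h3 j
    simp only [Finset.sum_apply, Pi.smul_apply, smul_eq_mul] at h4
    rw [h4]
    refine Finset.sum_congr rfl fun l _ => ?_
    have h5 := congrFun (hab l) j
    simp only [Pi.smul_apply, smul_eq_mul] at h5
    rw [h5]
  -- |det U| = 1
  have hUdet : (Matrix.of U).det.natAbs = 1 := by
    have h1 : Matrix.of U = (bN.toMatrix (fun i => bS i))ᵀ := by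
      ext i l
      rw [Matrix.transpose_apply, Module.Basis.toMatrix_apply]
      rfl
    have h2 : (bN.toMatrix (fun i => bS i)).det * ((bS.toMatrix (fun i => bN i)).det) = 1 := by
      rw [← Matrix.det_mul, Module.Basis.toMatrix_mul_toMatrix_flip, Matrix.det_one]
    have h3 : IsUnit (Matrix.of U).det := by
      rw [h1, Matrix.det_transpose]
      exact IsUnit.of_mul_eq_one _ h2
    exact Int.isUnit_iff_natAbs_eq.mp h3
  -- minors factorization
  have hminor : ∀ g : Fin k ↪ Fin n,
      (Matrix.of fun i j => S i (g j)).det.natAbs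
        = (∏ i, (a i).natAbs) * (Matrix.of fun i j => Bm i (g j)).det.natAbs := by
    intro g
    have h1 : (Matrix.of fun i j => S i (g j))
        = (Matrix.of U) * (Matrix.of fun l j => a l * Bm l (g j)) := by
      ext i j
      rw [Matrix.mul_apply]
      exact hS_eq i (g j)
    have h2 : (Matrix.of fun l j => a l * Bm l (g j)).det
        = (∏ l, a l) * (Matrix.of fun l j => Bm l (g j)).det :=
      Matrix.det_mul_column a _
    rw [h1, Matrix.det_mul, h2, Int.natAbs_mul, hUdet, one_mul, Int.natAbs_mul]
    congr 1
    exact map_prod Int.natAbsHom a Finset.univ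
  -- gcd of minors of Bm is 1
  have hgcdB : (Finset.univ.gcd fun g : Fin k ↪ Fin n =>
      (Matrix.of fun i j => Bm i (g j)).det.natAbs) = 1 := by
    by_contra hne
    obtain ⟨p, pp, hpdvd⟩ := Nat.exists_prime_and_dvd hne
    haveI : Fact p.Prime := ⟨pp⟩
    have hall : ∀ g : Fin k ↪ Fin n,
        (Matrix.of fun i j => ((Bm i (g j) : ZMod p))).det = 0 := by
      intro g
      have h1 : p ∣ (Matrix.of fun i j => Bm i (g j)).det.natAbs :=
        dvd_trans hpdvd (Finset.gcd_dvd (Finset.mem_univ g))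
      have h2 : ((p : ℤ)) ∣ (Matrix.of fun i j => Bm i (g j)).det := Int.natCast_dvd.mpr h1
      have h3 : (Matrix.of fun i j => ((Bm i (g j) : ZMod p)))
          = (Int.castRingHom (ZMod p)).mapMatrix (Matrix.of fun i j => Bm i (g j)) := by
        ext i j
        rfl
      rw [h3, ← RingHom.map_det]
      exact (ZMod.intCast_zmod_eq_zero_iff_dvd _ _).mpr h2
    have hnli : ¬ LinearIndependent (ZMod p) (fun i (j : Fin n) => ((Bm i j : ZMod p))) := by
      intro hli
      obtain ⟨g, hg⟩ := exists_minor_ne_zero hli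
      exact hg (hall g)
    obtain ⟨c, hc0, i0, hci0⟩ := Fintype.not_linearIndependent_iff.mp hnli
    choose w hw using fun i => ZMod.intCast_surjective (n := p) (c i)
    have hdvd : ∀ j, (p : ℤ) ∣ ∑ i, w i * Bm i j := by
      intro j
      rw [← ZMod.intCast_zmod_eq_zero_iff_dvd]
      push_cast
      have h0 := congrFun hc0 j
      simp only [Finset.sum_apply, Pi.smul_apply, smul_eq_mul, Pi.zero_apply] at h0
      rw [← h0]
      exact Finset.sum_congr rfl fun i _ => by rw [hw i]
    set y : Fin n → ℤ := fun j => (∑ i, w i * Bm i j) / p with hydef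
    have hy : ∀ j, (p : ℤ) * y j = ∑ i, w i * Bm i j :=
      fun j => Int.mul_ediv_cancel' (hdvd j)
    have hyM : y ∈ M := by
      rw [hmemM]
      have hBmW : ∀ i, castQ n (Bm i) ∈ Wq := fun i => (hmemM _).mp (bO i).2
      have hcy : castQ n y = (p : ℚ)⁻¹ • ∑ i, (w i : ℚ) • castQ n (Bm i) := by
        funext j
        have h1 : ((p : ℤ) * y j : ℚ) = ((∑ i, w i * Bm i j : ℤ) : ℚ) := by
          exact_mod_cast congrArg (fun t : ℤ => (t : ℚ)) (hy j)
        push_cast at h1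
        simp only [Pi.smul_apply, Finset.sum_apply, castQ_apply, smul_eq_mul]
        have hp0 : (p : ℚ) ≠ 0 := by
          exact_mod_cast pp.ne_zero
        field_simp
        rw [mul_comm] at h1
        rw [h1]
      rw [hcy]
      exact Submodule.smul_mem _ _ (Submodule.sum_mem _ fun i _ =>
        Submodule.smul_mem _ _ (hBmW i))
    set u : Fin k → ℤ := fun i => bO.repr ⟨y, hyM⟩ i with hudef
    have hyu : y = ∑ i, u i • Bm i := by
      have h1 := bO.sum_repr ⟨y, hyM⟩
      have h2 : ((∑ i, bO.repr ⟨y, hyM⟩ i • bO i : ↥M) : Fin n → ℤ) = y := by rw [h1]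
      rw [← h2]
      push_cast
      rfl
    have hw_eq : ∀ i, w i - p * u i = 0 := by
      apply Fintype.linearIndependent_iff.mp hBmli
      funext j
      simp only [Finset.sum_apply, Pi.smul_apply, smul_eq_mul, Pi.zero_apply]
      have h1 := congrFun hyu j
      simp only [Finset.sum_apply, Pi.smul_apply, smul_eq_mul] at h1
      have h2 : ∑ i, (w i - p * u i) * Bm i j
          = (∑ i, w i * Bm i j) - p * ∑ i, u i * Bm i j := by
        rw [Finset.mul_sum, ← Finset.sum_sub_distrib]
        exact Finset.sum_congr rfl fun i _ => by ring
      rw [h2, ← h1, ← hy j, sub_self]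
    apply hci0
    rw [← hw i0]
    have h3 : w i0 = p * u i0 := by have := hw_eq i0; omega
    rw [h3]
    push_cast
    simp
  -- conclude
  have hgcdS : gcdDet S = ∏ i, (a i).natAbs := by
    unfold gcdDet
    rw [Finset.gcd_congr rfl (fun g _ => hminor g)]
    rw [Finset.gcd_mul_left, hgcdB, mul_one]
    simp
  rw [hcount, hgcdS]
theorem stmt15 {a b n : ℕ} (A : Fin a → Fin n → ℤ) (B : Fin b → Fin n → ℤ)
    (hdisj : ∀ i j, A i ≠ B j)
    (hli : LinearIndependent ℤ (Fin.append A B))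
    (horth : gcdDet (Fin.append A B) = gcdDet A * gcdDet B) :
    (zonoPts (Fin.append A B)).ncard = (zonoPts A).ncard * (zonoPts B).ncard := by
  have hliA : LinearIndependent ℤ A := by
    have h1 := hli.comp (Fin.castAdd b) (Fin.castAdd_injective a b)
    have h2 : (Fin.append A B ∘ Fin.castAdd b) = A := by
      funext i
      simp [Function.comp, Fin.append_left]
    rwa [h2] at h1
  have hliB : LinearIndependent ℤ B := by
    have h1 := hli.comp (Fin.natAdd a) (Fin.natAddEmb a).injective
    have h2 : (Fin.append A B ∘ Fin.natAdd a) = B := by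
      funext i
      simp [Function.comp, Fin.append_right]
    rwa [h2] at h1
  rw [zono_card _ hli, zono_card _ hliA, zono_card _ hliB, horth]
end

section
/- If A = {a^1,…,a^n} is a thin te-interlace, then the Hilbert basis of cone(A) is A ∪ { (1/2)(a^i + a^j) : 1 ≤ i < j ≤ n }. -/
/-- All the nonzero maximal (m×m) subdeterminants of `A` have the same absolute value. -/
def Equimodular {m n : ℕ} (A : Matrix (Fin m) (Fin n) ℚ) : Prop :=
  ∃ d : ℚ, ∀ g : Fin m ↪ Fin n,
    (A.submatrix id g).det ≠ 0 → |(A.submatrix id g).det| = d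

/-- Every set of linearly independent rows of `A` forms an equimodular matrix. -/
def TotallyEquimodular {m n : ℕ} (A : Matrix (Fin m) (Fin n) ℚ) : Prop :=
  ∀ (k : ℕ) (e : Fin k ↪ Fin m),
    LinearIndependent ℚ (fun i => A (e i)) → Equimodular (A.submatrix e id)

/-- All entries of `A` are `0`, `1` or `-1`. -/
def ZeroPmOne {m n : ℕ} (A : Matrix (Fin m) (Fin n) ℚ) : Prop :=
  ∀ i j, A i j = 0 ∨ A i j = 1 ∨ A i j = -1

/-- A linearly independent set of `0,±1` vectors whose matrix is totally equimodular. -/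
def TeSet {m n : ℕ} (A : Matrix (Fin m) (Fin n) ℚ) : Prop :=
  ZeroPmOne A ∧ LinearIndependent ℚ (fun i => A i) ∧ TotallyEquimodular A

/-- A linearly independent set of `0,±1` vectors whose matrix is totally unimodular. -/
def TuSet {m n : ℕ} (A : Matrix (Fin m) (Fin n) ℚ) : Prop :=
  ZeroPmOne A ∧ LinearIndependent ℚ (fun i => A i) ∧ A.IsTotallyUnimodular

/-- A te-set, not a tu-set, all of whose proper subsets of rows are tu-sets. -/
def TeLace {m n : ℕ} (A : Matrix (Fin m) (Fin n) ℚ) : Prop :=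
  TeSet A ∧ ¬ TuSet A ∧
    ∀ (k : ℕ) (e : Fin k ↪ Fin m), k < m → TuSet (A.submatrix e id)

/-- A te-set, not a tu-set, in which each pair of vectors is a te-lace. -/
def TeInterlace {m n : ℕ} (A : Matrix (Fin m) (Fin n) ℚ) : Prop :=
  TeSet A ∧ ¬ TuSet A ∧ ∀ i j : Fin m, i ≠ j → TeLace (Matrix.of ![A i, A j])

/-- A te-interlace of size `m` with equideterminant `2 ^ (m - 1)`. -/
def ThinTeInterlace {m n : ℕ} (A : Matrix (Fin m) (Fin n) ℚ) : Prop :=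
  TeInterlace A ∧ ∃ g : Fin m ↪ Fin n, |(A.submatrix id g).det| = 2 ^ (m - 1)

/-- A te-interlace of size `m` with equideterminant `2 ^ m`. -/
def ThickTeInterlace {m n : ℕ} (A : Matrix (Fin m) (Fin n) ℚ) : Prop :=
  TeInterlace A ∧ ∃ g : Fin m ↪ Fin n, |(A.submatrix id g).det| = 2 ^ m

/-- The simplicial cone generated by the integer vectors `A`. -/
def coneOf {k n : ℕ} (A : Fin k → Fin n → ℤ) : Set (Fin n → ℚ) :=
  {x | ∃ c : Fin k → ℚ, (∀ i, 0 ≤ c i) ∧ ∀ j, x j = ∑ i, c i * (A i j : ℚ)}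

/-- `H` is a set of integer vectors of `C` whose nonnegative integer combinations
generate all the integer points of `C`. -/
def GeneratesIntPoints {n : ℕ} (C : Set (Fin n → ℚ)) (H : Set (Fin n → ℤ)) : Prop :=
  (∀ h ∈ H, (fun j => ((h j : ℚ))) ∈ C) ∧
  ∀ x : Fin n → ℤ, (fun j => ((x j : ℚ))) ∈ C →
    ∃ (F : Finset (Fin n → ℤ)) (c : (Fin n → ℤ) → ℕ), ↑F ⊆ H ∧
      ∀ j, x j = ∑ h ∈ F, (c h : ℤ) * h j

/-- `H` is the Hilbert basis of `C`: a minimal set of integer vectors of `C`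
generating all the integer points of `C` by nonnegative integer combinations. -/
def IsHilbertBasis {n : ℕ} (C : Set (Fin n → ℚ)) (H : Set (Fin n → ℤ)) : Prop :=
  GeneratesIntPoints C H ∧ ∀ H' ⊆ H, GeneratesIntPoints C H' → H' = H

open Matrix

lemma sign_range_iff (x : ℚ) :
    x ∈ Set.range (SignType.cast : SignType → ℚ) ↔ x = 0 ∨ x = 1 ∨ x = -1 := by
  constructor
  · rintro ⟨s, rfl⟩; cases s <;> simp
  · rintro (rfl | rfl | rfl)
    exacts [⟨0, rfl⟩, ⟨1, rfl⟩, ⟨-1, by simp⟩]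

lemma det2_aux (a b c d : ℚ) (ha : a = 0 ∨ a = 1 ∨ a = -1) (hb : b = 0 ∨ b = 1 ∨ b = -1)
    (hc : c = 0 ∨ c = 1 ∨ c = -1) (hd : d = 0 ∨ d = 1 ∨ d = -1)
    (h : ¬(a * d - b * c = 0 ∨ a * d - b * c = 1 ∨ a * d - b * c = -1)) :
    |a * d - b * c| = 2 := by
  rcases ha with rfl|rfl|rfl <;> rcases hb with rfl|rfl|rfl <;>
    rcases hc with rfl|rfl|rfl <;> rcases hd with rfl|rfl|rfl <;> revert h <;> norm_num

/-- the equideterminant of a non-TU pair is 2 -/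
lemma pair_equimod {m n : ℕ} (A : Fin m → Fin n → ℤ)
    (hA : TeInterlace (Matrix.of fun i j => ((A i j : ℚ)))) {i j : Fin m} (hij : i ≠ j) :
    ∃ d : ℚ, d = 2 ∧ ∀ g : Fin 2 ↪ Fin n,
      ((Matrix.of ![(Matrix.of fun i j => ((A i j : ℚ))) i,
        (Matrix.of fun i j => ((A i j : ℚ))) j]).submatrix id g).det ≠ 0 →
      |((Matrix.of ![(Matrix.of fun i j => ((A i j : ℚ))) i,
        (Matrix.of fun i j => ((A i j : ℚ))) j]).submatrix id g).det| = 2 := by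
  set Q : Matrix (Fin m) (Fin n) ℚ := Matrix.of fun i j => ((A i j : ℚ)) with hQ
  obtain ⟨⟨hP01, hPli, hPte⟩, hPnotTU, -⟩ := hA.2.2 i j hij
  set P : Matrix (Fin 2) (Fin n) ℚ := Matrix.of ![Q i, Q j] with hP
  have hPE : Equimodular P := by
    have := hPte 2 (Function.Embedding.refl _) hPli
    rwa [show P.submatrix (⇑(Function.Embedding.refl (Fin 2))) id = P from rfl] at this
  obtain ⟨d, hd⟩ := hPE
  have hPTU : ¬ P.IsTotallyUnimodular := fun h => hPnotTU ⟨hP01, hPli, h⟩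
  rw [Matrix.IsTotallyUnimodular] at hPTU
  push_neg at hPTU
  obtain ⟨k, f, g0, hf, hg0, hdet⟩ := hPTU
  rw [sign_range_iff] at hdet
  have hk : k ≤ 2 := by simpa using Fintype.card_le_of_injective f hf
  interval_cases k
  · exact absurd (Or.inr (Or.inl Matrix.det_fin_zero)) hdet
  · exact absurd (by rw [Matrix.det_fin_one]; exact hP01 (f 0) (g0 0)) hdet
  · -- k = 2
    have habs : |(P.submatrix f g0).det| = 2 := by
      rw [Matrix.det_fin_two] at hdet ⊢
      exact det2_aux _ _ _ _ (hP01 _ _) (hP01 _ _) (hP01 _ _) (hP01 _ _) hdet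
    have hfb : Function.Bijective f := Finite.injective_iff_bijective.mp hf
    set σ : Equiv.Perm (Fin 2) := Equiv.ofBijective f hfb with hσ
    have hPfg : P.submatrix f g0 = (P.submatrix id g0).submatrix σ id := by
      ext a b; simp [Matrix.submatrix_apply, hσ, Equiv.ofBijective_apply]
    have habs2 : |(P.submatrix id g0).det| = 2 := by
      rw [hPfg, Matrix.det_permute] at habs
      rcases Int.units_eq_one_or (Equiv.Perm.sign σ) with h1 | h1 <;>
        rw [h1] at habs <;> simpa [abs_mul] using habs
    have hne : (P.submatrix id g0).det ≠ 0 := by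
      intro h0; rw [h0] at habs2; norm_num at habs2
    have hthis : |(P.submatrix id (⇑(⟨g0, hg0⟩ : Fin 2 ↪ Fin n))).det| = d := hd ⟨g0, hg0⟩ hne
    have hd2 : d = 2 := by rw [← habs2]; exact hthis.symm
    exact ⟨d, hd2, fun g hg => by rw [hd g hg, hd2]⟩
lemma abs_one_of {x : ℚ} (h01 : x = 0 ∨ x = 1 ∨ x = -1) (hx : x ≠ 0) : |x| = 1 := by
  rcases h01 with rfl | rfl | rfl <;> simp_all

lemma support_aux {m n : ℕ} (A : Fin m → Fin n → ℤ)
    (hA : TeInterlace (Matrix.of fun i j => ((A i j : ℚ)))) {i j : Fin m} (hij : i ≠ j)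
    {c : Fin n} (hic : A i c ≠ 0) : A j c ≠ 0 := by
  obtain ⟨d, hd2, hd⟩ := pair_equimod A hA hij
  obtain ⟨⟨hP01, hPli, -⟩, -, -⟩ := hA.2.2 i j hij
  set Q : Matrix (Fin m) (Fin n) ℚ := Matrix.of fun i j => ((A i j : ℚ)) with hQ
  set P : Matrix (Fin 2) (Fin n) ℚ := Matrix.of ![Q i, Q j] with hP
  have hP0 : ∀ c', P 0 c' = (A i c' : ℚ) := fun _ => rfl
  have hP1 : ∀ c', P 1 c' = (A j c' : ℚ) := by
    intro c'; simp [hP, Matrix.cons_val_one, Matrix.head_cons, hQ]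
  intro hjc0
  have hP1c : P 1 c = 0 := by rw [hP1, hjc0]; norm_num
  have hne1 : P 1 ≠ 0 := hPli.ne_zero 1
  obtain ⟨c', hc'⟩ : ∃ c', P 1 c' ≠ 0 := by
    by_contra h; push_neg at h; exact hne1 (funext h)
  have hcc' : c ≠ c' := fun h => hc' (h ▸ hP1c)
  have hinj : Function.Injective ![c, c'] := by
    intro x y hxy
    fin_cases x <;> fin_cases y <;> simp_all
  set g2 : Fin 2 ↪ Fin n := ⟨![c, c'], hinj⟩ with hg2
  have hdetv : (P.submatrix id ⇑g2).det = P 0 c * P 1 c' - P 0 c' * P 1 c := by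
    rw [Matrix.det_fin_two]
    simp [hg2, Matrix.submatrix_apply]
  have hP0c : P 0 c ≠ 0 := by rw [hP0]; exact_mod_cast hic
  have hne : (P.submatrix id ⇑g2).det ≠ 0 := by
    rw [hdetv, hP1c, mul_zero, sub_zero]
    exact mul_ne_zero hP0c hc'
  have habs := hd g2 hne
  rw [hdetv, hP1c, mul_zero, sub_zero, abs_mul,
    abs_one_of (hP01 0 c) hP0c, abs_one_of (hP01 1 c') hc'] at habs
  norm_num at habs
open Matrix

lemma vecMul_adjugate_aux {k : ℕ} (B : Matrix (Fin k) (Fin k) ℚ) (u : Fin k → ℚ) :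
    (u ᵥ* B) ᵥ* B.adjugate = B.det • u := by
  rw [Matrix.vecMul_vecMul, Matrix.mul_adjugate]
  ext i
  simp [Matrix.vecMul, dotProduct, Matrix.one_apply, mul_ite,
    Finset.sum_ite_eq', mul_comm]

lemma halfint {p n : ℕ} (A : Fin (p+1) → Fin n → ℤ) (g : Fin (p+1) ↪ Fin n)
    (hpar : ∀ i j', 2 ∣ A i (g j') - A 0 (g j'))
    (hdet : |((Matrix.of fun i j => ((A i j : ℚ))).submatrix id ⇑g).det| = 2 ^ p)
    (c : Fin (p+1) → ℚ) (x : Fin n → ℤ)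
    (hx : ∀ j, ((x j : ℚ)) = ∑ i, c i * (A i j : ℚ)) :
    ∃ z : Fin (p+1) → ℤ, ∀ i, ((z i : ℚ)) = 2 * c i := by
  set B : Matrix (Fin (p+1)) (Fin (p+1)) ℚ :=
    (Matrix.of fun i j => ((A i j : ℚ))).submatrix id ⇑g with hB
  have hBapp : ∀ i j, B i j = ((A i (g j) : ℚ)) := fun _ _ => rfl
  set Mz : Matrix (Fin (p+1)) (Fin (p+1)) ℤ :=
    Matrix.of fun i j => if i = 0 then A 0 (g j) else (A i (g j) - A 0 (g j)) / 2 with hMz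
  set Mq : Matrix (Fin (p+1)) (Fin (p+1)) ℚ := (Int.castRingHom ℚ).mapMatrix Mz with hMqdef
  have hMq : ∀ i j, Mq i j = if i = 0 then B i j else (B i j - B 0 j) / 2 := by
    intro i j
    by_cases hi : i = 0
    · subst hi; simp [hMqdef, hMz, hBapp]
    · obtain ⟨t, ht⟩ := hpar i j
      have ht2 : A i (g j) - A 0 (g j) = 2 * t := ht
      have htq : ((A i (g j) : ℚ)) - ((A 0 (g j) : ℚ)) = 2 * (t : ℚ) := by exact_mod_cast ht2
      simp only [hMqdef, hMz, RingHom.mapMatrix_apply, Matrix.map_apply, Matrix.of_apply,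
        if_neg hi]
      rw [ht2, Int.mul_ediv_cancel_left _ (by norm_num)]
      show ((t : ℚ)) = (B i j - B 0 j) / 2
      rw [hBapp, hBapp, htq]
      ring
  set L : Matrix (Fin (p+1)) (Fin (p+1)) ℚ := Matrix.of fun i j =>
    if i = 0 then (if j = 0 then (1:ℚ) else 0)
    else (if j = i then 1/2 else if j = 0 then -(1/2) else 0) with hL
  have hLB : Mq = L * B := by
    ext i j
    rw [Matrix.mul_apply, hMq]
    by_cases hi : i = 0
    · subst hi
      rw [if_pos rfl]
      have hterm : ∀ k, L 0 k * B k j = if k = (0 : Fin (p+1)) then B 0 j else 0 := by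
        intro k; by_cases hk : k = 0 <;> simp [hL, hk]
      rw [Finset.sum_congr rfl fun k _ => hterm k, Finset.sum_ite_eq']
      simp
    · rw [if_neg hi]
      have hterm : ∀ k, L i k * B k j =
          (if k = i then (1/2 : ℚ) * B k j else 0)
            + (if k = (0 : Fin (p+1)) then -(1/2 : ℚ) * B k j else 0) := by
        intro k
        by_cases hk : k = i
        · subst hk; simp [hL, hi]
        · by_cases hk0 : k = 0 <;> simp [hL, hk, hk0, hi, Ne.symm hi]
      rw [Finset.sum_congr rfl fun k _ => hterm k, Finset.sum_add_distrib,
        Finset.sum_ite_eq', Finset.sum_ite_eq']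
      simp only [Finset.mem_univ, if_pos]
      ring
  have hLtri : L.BlockTriangular ⇑OrderDual.toDual := by
    intro a b hab
    have hba : a < b := hab
    have hb0 : b ≠ 0 := by
      intro h; subst h; exact absurd hba (by simp)
    have hbne : b ≠ a := ne_of_gt hba
    by_cases ha : a = 0 <;> simp [hL, ha, hb0, hbne]
  have hdetL : L.det = (1/2 : ℚ)^p := by
    rw [Matrix.det_of_lowerTriangular L hLtri, Fin.prod_univ_succ]
    simp [hL, Fin.succ_ne_zero]
  have hdetMq : |Mq.det| = 1 := by
    rw [hLB, Matrix.det_mul, abs_mul, hdetL, hdet, abs_pow,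
      show |(1/2 : ℚ)| = 1/2 by norm_num, ← mul_pow]
    norm_num
  have hcastdet : ((Mz.det : ℤ) : ℚ) = Mq.det := by
    rw [hMqdef, ← RingHom.map_det]; rfl
  have hdetMz : Mz.det = 1 ∨ Mz.det = -1 := by
    have habs : |Mz.det| = 1 := by
      have : ((|Mz.det| : ℤ) : ℚ) = 1 := by rw [Int.cast_abs, hcastdet, hdetMq]
      exact_mod_cast this
    rcases (abs_eq (by norm_num : (0:ℤ) ≤ 1)).mp habs with h | h
    · exact Or.inl h
    · exact Or.inr (by omega)
  set d : Fin (p+1) → ℚ := fun i => if i = 0 then (∑ k, c k) else 2 * c i with hd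
  have hkey : d ᵥ* Mq = fun j => ((x (g j) : ℚ)) := by
    funext j
    show ∑ i, d i * Mq i j = _
    rw [hx (g j)]
    have e0 : d 0 * Mq 0 j = (∑ k, c k) * B 0 j := by rw [hMq]; simp [hd]
    have es : ∀ i : Fin p, d i.succ * Mq i.succ j
        = c i.succ * B i.succ j - c i.succ * B 0 j := by
      intro i; rw [hMq]; simp [hd, Fin.succ_ne_zero]; ring
    rw [Fin.sum_univ_succ (f := fun i => d i * Mq i j),
      Fin.sum_univ_succ (f := fun i => c i * ((A i (g j) : ℚ))), e0,
      Finset.sum_congr rfl fun i _ => es i, Finset.sum_sub_distrib, ← Finset.sum_mul,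
      Fin.sum_univ_succ (f := c)]
    simp only [hBapp]
    ring
  have hsolve : ∀ i, Mq.det * d i = ∑ j, ((x (g j) : ℚ)) * Mq.adjugate j i := by
    intro i
    have h2 := vecMul_adjugate_aux Mq d
    rw [hkey] at h2
    calc Mq.det * d i = (Mq.det • d) i := rfl
      _ = ((fun j => ((x (g j) : ℚ))) ᵥ* Mq.adjugate) i := by rw [← h2]
      _ = ∑ j, ((x (g j) : ℚ)) * Mq.adjugate j i := by
          simp [Matrix.vecMul, dotProduct]
  have hadj : ∀ a b, ((Mz.adjugate a b : ℤ) : ℚ) = Mq.adjugate a b := by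
    intro a b
    rw [hMqdef, ← RingHom.map_adjugate]; rfl
  obtain ⟨w, hw⟩ : ∃ w : Fin (p+1) → ℤ, ∀ i, ((w i : ℚ)) = Mq.det * d i := by
    refine ⟨fun i => ∑ j, x (g j) * Mz.adjugate j i, fun i => ?_⟩
    rw [hsolve i]
    push_cast
    exact Finset.sum_congr rfl fun j _ => by rw [hadj]
  have hdi : ∀ i, ∃ zi : ℤ, ((zi : ℚ)) = d i := by
    intro i
    rcases hdetMz with h | h
    · refine ⟨w i, ?_⟩
      rw [hw i, ← hcastdet, h]; norm_num
    · refine ⟨-w i, ?_⟩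
      rw [Int.cast_neg, hw i, ← hcastdet, h]; push_cast; ring
  choose zd hzd using hdi
  refine ⟨fun i => if i = 0 then 2 * zd 0 - ∑ k : Fin p, zd k.succ else zd i, fun i => ?_⟩
  have h0 : ((zd 0 : ℚ)) = ∑ k, c k := by rw [hzd 0, hd]; simp
  have hs : ∀ k : Fin p, ((zd k.succ : ℚ)) = 2 * c k.succ := by
    intro k; rw [hzd k.succ, hd]; simp [Fin.succ_ne_zero]
  by_cases hi : i = 0
  · subst hi
    show ((2 * zd 0 - ∑ k : Fin p, zd k.succ : ℤ) : ℚ) = 2 * c 0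
    push_cast
    rw [h0, Finset.sum_congr rfl fun k _ => hs k, Fin.sum_univ_succ (f := c),
      show (∑ k : Fin p, 2 * c k.succ) = 2 * ∑ k : Fin p, c k.succ from (Finset.mul_sum _ _ _).symm]
    ring
  · show ((if i = 0 then 2 * zd 0 - ∑ k : Fin p, zd k.succ else zd i : ℤ) : ℚ) = 2 * c i
    rw [if_neg hi, hzd i, hd]
    simp [hi]
lemma pack_comb {n : ℕ} (H : Set (Fin n → ℤ)) {ι : Type} [Fintype ι]
    (v : ι → Fin n → ℤ) (a : ι → ℕ) (hv : ∀ l, v l ∈ H) (x : Fin n → ℤ)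
    (hx : ∀ j, x j = ∑ l, (a l : ℤ) * v l j) :
    ∃ (F : Finset (Fin n → ℤ)) (c : (Fin n → ℤ) → ℕ), ↑F ⊆ H ∧
      ∀ j, x j = ∑ h ∈ F, (c h : ℤ) * h j := by
  classical
  refine ⟨Finset.image v Finset.univ,
    fun h => ∑ l ∈ Finset.univ.filter (fun l => v l = h), a l, ?_, ?_⟩
  · intro h hh
    simp only [Finset.coe_image] at hh
    obtain ⟨l, -, rfl⟩ := hh
    exact hv l
  · intro j
    rw [hx j, ← Finset.sum_fiberwise_of_maps_to
      (fun l _ => Finset.mem_image_of_mem v (Finset.mem_univ l)) (fun l => (a l : ℤ) * v l j)]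
    refine Finset.sum_congr rfl fun h _ => ?_
    push_cast
    rw [Finset.sum_mul]
    exact Finset.sum_congr rfl fun l hl => by rw [(Finset.mem_filter.mp hl).2]

lemma range_pair_sum (r : ℕ) (G : ℕ → ℚ) :
    ∑ q ∈ Finset.range (2*r), G q = ∑ p ∈ Finset.range r, (G (2*p) + G (2*p+1)) := by
  induction r with
  | zero => simp
  | succ r ih =>
    rw [show 2*(r+1) = (2*r+1)+1 by omega, Finset.sum_range_succ, Finset.sum_range_succ,
      Finset.sum_range_succ, ih]
    ring

lemma mem_cone_row {m n : ℕ} (A : Fin m → Fin n → ℤ) (i : Fin m) :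
    (fun j => ((A i j : ℚ))) ∈ coneOf A := by
  classical
  refine ⟨fun k => if k = i then 1 else 0, fun k => by by_cases h : k = i <;> simp [h], fun j => ?_⟩
  have : ∀ k : Fin m, (if k = i then (1:ℚ) else 0) * ((A k j : ℚ))
      = if k = i then ((A k j : ℚ)) else 0 := by intro k; split <;> ring
  rw [Finset.sum_congr rfl fun k _ => this k, Finset.sum_ite_eq']
  simp

lemma mem_cone_half {m n : ℕ} (A : Fin m → Fin n → ℤ) {x : Fin n → ℤ} {i j : Fin m}
    (hx : ∀ c, 2 * x c = A i c + A j c) :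
    (fun c => ((x c : ℚ))) ∈ coneOf A := by
  classical
  refine ⟨fun k => (if k = i then (1:ℚ)/2 else 0) + (if k = j then (1:ℚ)/2 else 0),
    fun k => by dsimp only; split_ifs <;> norm_num,
    fun c => ?_⟩
  have h2 : 2 * ((x c : ℚ)) = ((A i c : ℚ)) + ((A j c : ℚ)) := by exact_mod_cast hx c
  have hterm : ∀ k : Fin m,
      ((if k = i then (1:ℚ)/2 else 0) + (if k = j then (1:ℚ)/2 else 0)) * ((A k c : ℚ))
      = (if k = i then (1/2) * ((A k c : ℚ)) else 0)
        + (if k = j then (1/2) * ((A k c : ℚ)) else 0) := by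
    intro k; split_ifs <;> ring
  rw [Finset.sum_congr rfl fun k _ => hterm k, Finset.sum_add_distrib,
    Finset.sum_ite_eq', Finset.sum_ite_eq']
  simp only [Finset.mem_univ, if_pos]
  linarith
theorem stmt18 {m n : ℕ} (A : Fin m → Fin n → ℤ)
    (hA : ThinTeInterlace (Matrix.of fun i j => ((A i j : ℚ)))) :
    IsHilbertBasis (coneOf A)
      (Set.range A ∪
        {x | ∃ i j : Fin m, i < j ∧ ∀ c, 2 * x c = A i c + A j c}) := by
  classical
  obtain ⟨hTI, g, hdet⟩ := hA
  cases m with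
  | zero =>
    constructor
    · constructor
      · rintro h (⟨i, -⟩ | ⟨i, -, -⟩) <;> exact i.elim0
      · intro x hx
        obtain ⟨c, -, hc⟩ := hx
        refine ⟨∅, fun _ => 0, by simp, fun j => ?_⟩
        have := hc j
        simp only [Finset.univ_eq_empty, Finset.sum_empty] at this
        simp only [Finset.sum_empty]
        exact_mod_cast this
    · intro H' hsub hgen
      apply Set.Subset.antisymm hsub
      rintro y (⟨i, -⟩ | ⟨i, -, -⟩) <;> exact i.elim0
  | succ p =>
    set Q : Matrix (Fin (p+1)) (Fin n) ℚ := Matrix.of fun i j => ((A i j : ℚ)) with hQdef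
    have hdet' : |(Q.submatrix id ⇑g).det| = 2 ^ p := by simpa using hdet
    -- basic integer-level facts
    have h01 : ∀ i j, A i j = 0 ∨ A i j = 1 ∨ A i j = -1 := by
      intro i j
      rcases hTI.1.1 i j with h | h | h
      · refine Or.inl ?_
        have h' : ((A i j : ℚ)) = 0 := h
        exact_mod_cast h'
      · refine Or.inr (Or.inl ?_)
        have h' : ((A i j : ℚ)) = 1 := h
        exact_mod_cast h'
      · refine Or.inr (Or.inr ?_)
        have h' : ((A i j : ℚ)) = -1 := h
        exact_mod_cast h'
    have hsupp : ∀ {i j : Fin (p+1)} {c : Fin n}, i ≠ j → A i c ≠ 0 → A j c ≠ 0 :=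
      fun hij hic => support_aux A hTI hij hic
    have hpar2 : ∀ {i j : Fin (p+1)}, i ≠ j → ∀ c,
        (2 ∣ A i c - A j c) ∧ (2 ∣ A i c + A j c) := by
      intro i j hij c
      by_cases hz : A i c = 0
      · have hjz : A j c = 0 := by
          by_contra hne
          exact (hsupp (Ne.symm hij) hne) hz
        rw [hz, hjz]; norm_num
      · have hjz : A j c ≠ 0 := hsupp hij hz
        rcases h01 i c with h1 | h1 | h1 <;> rcases h01 j c with h2 | h2 | h2 <;>
          simp_all <;> omega
    have hparadd : ∀ {i j : Fin (p+1)}, i ≠ j → ∀ c, 2 ∣ A i c + A j c :=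
      fun hij c => (hpar2 hij c).2
    have hparsub : ∀ (i : Fin (p+1)) j', 2 ∣ A i (g j') - A 0 (g j') := by
      intro i j'
      by_cases hi : i = 0
      · subst hi; simp
      · exact (hpar2 hi (g j')).1
    have hdetne : (Q.submatrix id ⇑g).det ≠ 0 := by
      intro h0
      rw [h0, abs_zero] at hdet'
      exact pow_ne_zero p (two_ne_zero) hdet'.symm
    have hnz : ∀ (j' : Fin (p+1)) (i : Fin (p+1)), A i (g j') ≠ 0 := by
      intro j' i h0
      apply hdetne
      apply Matrix.det_eq_zero_of_column_eq_zero j'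
      intro i'
      show ((A i' (g j') : ℚ)) = 0
      by_cases hk : i' = i
      · subst hk; exact_mod_cast h0
      · by_contra hk0
        have : A i' (g j') ≠ 0 := fun hc => hk0 (by exact_mod_cast hc)
        exact (hsupp hk this) h0
    have hmemH : ∀ h ∈ (Set.range A ∪
        {x | ∃ i j : Fin (p+1), i < j ∧ ∀ c, 2 * x c = A i c + A j c}),
        (fun j => ((h j : ℚ))) ∈ coneOf A := by
      rintro h (⟨i, rfl⟩ | ⟨i, j, hij, h2⟩)
      · exact mem_cone_row A i
      · exact mem_cone_half A h2
    refine ⟨⟨hmemH, ?_⟩, ?_⟩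
    · -- generation
      intro x hx
      obtain ⟨c, hc0, hcx⟩ := hx
      have hcx' : ∀ j, ((x j : ℚ)) = ∑ i, c i * ((A i j : ℚ)) := fun j => hcx j
      obtain ⟨z, hz⟩ := halfint A g hparsub hdet' c x hcx'
      have hz0 : ∀ i, 0 ≤ z i := by
        intro i
        have h1 : (0:ℚ) ≤ 2 * c i := by
          have := hc0 i; linarith
        have : (0:ℚ) ≤ ((z i : ℚ)) := by rw [hz i]; exact h1
        exact_mod_cast this
      set T : Finset (Fin (p+1)) := Finset.univ.filter (fun i => z i % 2 = 1) with hT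
      have hci : ∀ i, c i = ((z i / 2 : ℤ) : ℚ) + (if i ∈ T then (1:ℚ)/2 else 0) := by
        intro i
        have h2ci : ((z i : ℚ)) = 2 * c i := hz i
        by_cases hodd : z i % 2 = 1
        · have hiT : i ∈ T := by simp [hT, hodd]
          rw [if_pos hiT]
          have he : ((z i : ℚ)) = 2 * ((z i / 2 : ℤ):ℚ) + 1 := by
            exact_mod_cast (by omega : z i = 2 * (z i / 2) + 1)
          linarith
        · have hiT : i ∉ T := by simp [hT, hodd]
          rw [if_neg hiT, add_zero]
          have hzero : z i % 2 = 0 := by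
            rcases Int.emod_two_eq (z i) with h | h
            · exact h
            · exact absurd h hodd
          have he : ((z i : ℚ)) = 2 * ((z i / 2 : ℤ):ℚ) := by
            exact_mod_cast (by omega : z i = 2 * (z i / 2))
          linarith
      have hkey : ∀ j, ((x j : ℚ)) = (∑ i, ((z i / 2 : ℤ):ℚ) * ((A i j : ℚ)))
          + (1/2) * ∑ i ∈ T, ((A i j : ℚ)) := by
        intro j
        rw [hcx' j, Finset.sum_congr rfl fun i (_ : i ∈ Finset.univ) => by rw [hci i]]
        have hterm : ∀ i : Fin (p+1),
            (((z i / 2 : ℤ):ℚ) + (if i ∈ T then (1:ℚ)/2 else 0)) * ((A i j : ℚ))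
            = ((z i / 2 : ℤ):ℚ) * ((A i j : ℚ))
              + (if i ∈ T then (1/2) * ((A i j : ℚ)) else 0) := by
          intro i; split_ifs <;> ring
        rw [Finset.sum_congr rfl fun i _ => hterm i, Finset.sum_add_distrib,
          Finset.sum_ite_mem, Finset.univ_inter, Finset.mul_sum]
      -- |T| is even
      have hcol : ∀ i, A i (g 0) = 1 ∨ A i (g 0) = -1 := by
        intro i
        rcases h01 i (g 0) with h | h | h
        · exact absurd h (hnz 0 i)
        · exact Or.inl h
        · exact Or.inr h
      have heven : Even T.card := by
        have hkey0 := hkey (g 0)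
        have hsum2 : ∑ i ∈ T, A i (g 0)
            = 2 * (x (g 0) - ∑ i, (z i / 2) * A i (g 0)) := by
          have hq : ((∑ i ∈ T, A i (g 0) : ℤ):ℚ)
              = ((2 * (x (g 0) - ∑ i, (z i / 2) * A i (g 0)) : ℤ):ℚ) := by
            push_cast
            linarith [hkey0]
          exact_mod_cast hq
        have heven2 : Even (∑ i ∈ T, A i (g 0)) :=
          ⟨x (g 0) - ∑ i, z i / 2 * A i (g 0), by rw [hsum2]; ring⟩
        have h3 : (T.card : ℤ) = ∑ i ∈ T, A i (g 0) - ∑ i ∈ T, (A i (g 0) - 1) := by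
          rw [← Finset.sum_sub_distrib]
          simp
        have h4 : Even (∑ i ∈ T, (A i (g 0) - 1)) :=
          Finset.even_sum _ (fun i _ => by rcases hcol i with h | h <;> rw [h] <;> norm_num)
        have h5 : Even ((T.card : ℤ)) := by rw [h3]; exact heven2.sub h4
        exact_mod_cast h5
      obtain ⟨r, hr⟩ := heven
      have hcard : T.card = 2 * r := by omega
      set σ := T.orderIsoOfFin hcard with hσ
      have h2p : ∀ q : Fin r, 2 * (q:ℕ) < 2*r := by intro q; have := q.isLt; omega
      have h2p1 : ∀ q : Fin r, 2 * (q:ℕ) + 1 < 2*r := by intro q; have := q.isLt; omega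
      set i1 : Fin r → Fin (p+1) := fun q => ((σ ⟨2*q, h2p q⟩ : {x // x ∈ T}) : Fin (p+1)) with hi1
      set i2 : Fin r → Fin (p+1) := fun q => ((σ ⟨2*q+1, h2p1 q⟩ : {x // x ∈ T}) : Fin (p+1)) with hi2
      have hi12 : ∀ q, i1 q < i2 q := by
        intro q
        have hlt : σ ⟨2*q, h2p q⟩ < σ ⟨2*q+1, h2p1 q⟩ :=
          σ.lt_iff_lt.mpr (by simp [Fin.mk_lt_mk])
        exact_mod_cast hlt
      set hv : Fin r → Fin n → ℤ := fun q c => (A (i1 q) c + A (i2 q) c) / 2 with hhv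
      have hv2 : ∀ q c, 2 * hv q c = A (i1 q) c + A (i2 q) c :=
        fun q c => Int.mul_ediv_cancel' (hparadd (ne_of_lt (hi12 q)) c)
      have hhalf : ∀ j, (∑ q : Fin r, ((hv q j : ℚ))) = (1/2) * ∑ i ∈ T, ((A i j : ℚ)) := by
        intro j
        set G' : ℕ → ℚ := fun q =>
          if h : q < 2*r then ((A ((σ ⟨q, h⟩ : {x // x ∈ T}) : Fin (p+1)) j : ℚ)) else 0 with hG'
        have hs1 : ∑ i ∈ T, ((A i j : ℚ)) = ∑ q : Fin (2*r), ((A ((σ q : {x // x ∈ T}) : Fin (p+1)) j : ℚ)) := by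
          rw [← Finset.sum_coe_sort T (fun i => ((A i j : ℚ)))]
          exact (Equiv.sum_comp σ.toEquiv (fun t : {x // x ∈ T} => ((A (t : Fin (p+1)) j : ℚ)))).symm
        have hs2 : ∑ q : Fin (2*r), ((A ((σ q : {x // x ∈ T}) : Fin (p+1)) j : ℚ))
            = ∑ q ∈ Finset.range (2*r), G' q := by
          rw [← Fin.sum_univ_eq_sum_range]
          refine Finset.sum_congr rfl fun q _ => ?_
          rw [hG']
          simp only [q.isLt, dif_pos]
        have hs3 : ∀ q : Fin r, G' (2*q) + G' (2*q+1)
            = ((A (i1 q) j : ℚ)) + ((A (i2 q) j : ℚ)) := by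
          intro q
          rw [hG']
          simp only [h2p q, h2p1 q, dif_pos]
          rfl
        have hs4 : ∑ p' ∈ Finset.range r, (G' (2*p') + G' (2*p'+1))
            = ∑ q : Fin r, (G' (2*q) + G' (2*q+1)) :=
          (Fin.sum_univ_eq_sum_range (fun q => G' (2*q) + G' (2*q+1)) r).symm
        rw [hs1, hs2, range_pair_sum, hs4, Finset.sum_congr rfl fun q _ => hs3 q]
        have hs5 : ∀ q : Fin r, ((hv q j : ℚ)) = (1/2) * (((A (i1 q) j : ℚ)) + ((A (i2 q) j : ℚ))) := by
          intro q
          have := hv2 q j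
          have hq : 2 * ((hv q j : ℚ)) = ((A (i1 q) j : ℚ)) + ((A (i2 q) j : ℚ)) := by
            exact_mod_cast this
          linarith
        rw [Finset.sum_congr rfl fun q _ => hs5 q, ← Finset.mul_sum]
      have hfinal : ∀ j, x j = (∑ i, (z i / 2) * A i j) + ∑ q : Fin r, hv q j := by
        intro j
        have hq : ((x j : ℚ)) = (((∑ i, (z i / 2) * A i j) + ∑ q : Fin r, hv q j : ℤ) : ℚ) := by
          push_cast
          rw [hkey j, ← hhalf j]
        exact_mod_cast hq
      refine pack_comb _ (Sum.elim A hv)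
        (Sum.elim (fun i => (z i / 2).toNat) (fun _ => 1)) ?_ x ?_
      · intro l
        cases l with
        | inl i => exact Or.inl ⟨i, rfl⟩
        | inr q => exact Or.inr ⟨i1 q, i2 q, hi12 q, fun c => hv2 q c⟩
      · intro j
        rw [Fintype.sum_sum_type]
        simp only [Sum.elim_inl, Sum.elim_inr]
        rw [hfinal j]
        congr 1
        · refine Finset.sum_congr rfl fun i _ => ?_
          rw [Int.toNat_of_nonneg (Int.ediv_nonneg (hz0 i) (by norm_num))]
        · simp
    · -- minimality
      intro H' hsub hgen
      apply Set.Subset.antisymm hsub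
      intro y hy
      have hyC := hmemH y hy
      obtain ⟨F, cc, hF, hsum⟩ := hgen.2 y hyC
      have hFH : ∀ h ∈ F, h ∈ (Set.range A ∪
          {x | ∃ i j : Fin (p+1), i < j ∧ ∀ c, 2 * x c = A i c + A j c}) :=
        fun h hh => hsub (hF hh)
      have hweights : ∀ h ∈ (Set.range A ∪
          {x | ∃ i j : Fin (p+1), i < j ∧ ∀ c, 2 * x c = A i c + A j c}),
          ∃ w : Fin (p+1) → ℚ,
          (∀ j', ((h (g j') : ℚ)) = ∑ i, w i * ((A i (g j') : ℚ))) ∧ (∑ i, w i) = 1 := by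
        rintro h (⟨i, rfl⟩ | ⟨i, j, hij, h2⟩)
        · refine ⟨fun k => if k = i then 1 else 0, fun j' => ?_, by simp⟩
          have hterm : ∀ k : Fin (p+1), (if k = i then (1:ℚ) else 0) * ((A k (g j') : ℚ))
              = if k = i then ((A k (g j') : ℚ)) else 0 := by intro k; split <;> ring
          rw [Finset.sum_congr rfl fun k _ => hterm k, Finset.sum_ite_eq']
          simp
        · refine ⟨fun k => (if k = i then (1:ℚ)/2 else 0) + (if k = j then (1:ℚ)/2 else 0),
            fun j' => ?_, ?_⟩
          · have h2q : 2 * ((h (g j') : ℚ)) = ((A i (g j') : ℚ)) + ((A j (g j') : ℚ)) := by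
              exact_mod_cast h2 (g j')
            have hterm : ∀ k : Fin (p+1),
                ((if k = i then (1:ℚ)/2 else 0) + (if k = j then (1:ℚ)/2 else 0)) * ((A k (g j') : ℚ))
                = (if k = i then (1/2) * ((A k (g j') : ℚ)) else 0)
                  + (if k = j then (1/2) * ((A k (g j') : ℚ)) else 0) := by
              intro k; split_ifs <;> ring
            rw [Finset.sum_congr rfl fun k _ => hterm k, Finset.sum_add_distrib,
              Finset.sum_ite_eq', Finset.sum_ite_eq']
            simp only [Finset.mem_univ, if_pos]
            linarith
          · rw [Finset.sum_add_distrib, Finset.sum_ite_eq', Finset.sum_ite_eq']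
            norm_num
      have hweights' : ∀ h : Fin n → ℤ, ∃ w : Fin (p+1) → ℚ,
          h ∈ (Set.range A ∪
            {x | ∃ i j : Fin (p+1), i < j ∧ ∀ c, 2 * x c = A i c + A j c}) →
          ((∀ j', ((h (g j') : ℚ)) = ∑ i, w i * ((A i (g j') : ℚ))) ∧ (∑ i, w i) = 1) := by
        intro h
        by_cases hh : h ∈ (Set.range A ∪
            {x | ∃ i j : Fin (p+1), i < j ∧ ∀ c, 2 * x c = A i c + A j c})
        · obtain ⟨w, hw1, hw2⟩ := hweights h hh
          exact ⟨w, fun _ => ⟨hw1, hw2⟩⟩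
        · exact ⟨0, fun hh' => absurd hh' hh⟩
      choose W hW using hweights'
      obtain ⟨wy1, wy2⟩ := hW y hy
      have hyg : ∀ j', ((y (g j') : ℚ))
          = ∑ i, (∑ h ∈ F, (cc h : ℚ) * W h i) * ((A i (g j') : ℚ)) := by
        intro j'
        have hq : ((y (g j') : ℚ)) = ∑ h ∈ F, (cc h : ℚ) * ((h (g j') : ℚ)) := by
          exact_mod_cast hsum (g j')
        rw [hq, Finset.sum_congr rfl fun h hh => by rw [(hW h (hFH h hh)).1 j']]
        calc ∑ h ∈ F, (cc h : ℚ) * ∑ i, W h i * ((A i (g j') : ℚ))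
            = ∑ h ∈ F, ∑ i, (cc h : ℚ) * (W h i * ((A i (g j') : ℚ))) :=
              Finset.sum_congr rfl fun h _ => Finset.mul_sum _ _ _
          _ = ∑ i, ∑ h ∈ F, (cc h : ℚ) * (W h i * ((A i (g j') : ℚ))) := Finset.sum_comm
          _ = ∑ i, (∑ h ∈ F, (cc h : ℚ) * W h i) * ((A i (g j') : ℚ)) := by
              refine Finset.sum_congr rfl fun i _ => ?_
              rw [Finset.sum_mul]
              exact Finset.sum_congr rfl fun h _ => (mul_assoc _ _ _).symm
      have huniq : W y = fun i => ∑ h ∈ F, (cc h : ℚ) * W h i := by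
        have hveq : (W y) ᵥ* (Q.submatrix id ⇑g)
            = (fun i => ∑ h ∈ F, (cc h : ℚ) * W h i) ᵥ* (Q.submatrix id ⇑g) := by
          funext j'
          show ∑ i, W y i * (Q.submatrix id ⇑g) i j' = ∑ i, _ * (Q.submatrix id ⇑g) i j'
          have e1 : ∀ (w : Fin (p+1) → ℚ), ∑ i, w i * (Q.submatrix id ⇑g) i j'
              = ∑ i, w i * ((A i (g j') : ℚ)) := fun w => rfl
          rw [e1, e1, ← wy1 j', hyg j']
        have hadj := congrArg (fun v => v ᵥ* (Q.submatrix id ⇑g).adjugate) hveq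
        simp only [vecMul_adjugate_aux] at hadj
        funext i
        have h5 := congrFun hadj i
        simp only [Pi.smul_apply, smul_eq_mul] at h5
        exact mul_left_cancel₀ hdetne h5
      have hsum1 : ∑ h ∈ F, (cc h : ℚ) = 1 := by
        have h6 : ∑ i, W y i = ∑ i, ∑ h ∈ F, (cc h : ℚ) * W h i := by rw [huniq]
        rw [wy2, Finset.sum_comm] at h6
        rw [Finset.sum_congr rfl (fun h hh =>
          by rw [← Finset.mul_sum, (hW h (hFH h hh)).2, mul_one])] at h6
        exact h6.symm
      have hsumN : ∑ h ∈ F, cc h = 1 := by exact_mod_cast hsum1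
      obtain ⟨h0, hh0F, hh0⟩ := Finset.exists_ne_zero_of_sum_ne_zero
        (by rw [hsumN]; norm_num : ∑ h ∈ F, cc h ≠ 0)
      have hsplit := Finset.add_sum_erase F cc hh0F
      have hcc1 : cc h0 = 1 := by omega
      have hrest : ∑ h ∈ F.erase h0, cc h = 0 := by omega
      have hyeq : y = h0 := by
        funext j
        rw [hsum j, ← Finset.add_sum_erase F _ hh0F, hcc1,
          Finset.sum_eq_zero (fun h hh => by
            rw [Finset.sum_eq_zero_iff.mp hrest h hh]; norm_num)]
        norm_num
      rw [hyeq]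
      exact hF hh0F
end
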